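/- Let S be a finite set with |S| ≥ k, a ∉ S, T = S ∪ {a}, and w : T → ℝ strictly positive. Let (X_1,…,X_k) be a k-sample without replacement from S, and define (Y_1,…,Y_k) by the cascade construction: Y_1 = a with probability w(a)/w(T), else Y_1 = X_1; and for i ≥ 1, letting Z_i be the unique element of {X_1,…,X_i, a} \ {Y_1,…,Y_i} and U_i = T \ {Y_1,…,Y_i}, set Y_{i+1} = Z_i with probability w(Z_i)/w(U_i), else Y_{i+1} = X_{i+1} (all randomizations independent). Then, almost surely, for every i ≤ k the elements Y_1,…,Y_i are pairwise distinct elements of T, {Y_1,…,Y_i} ⊆ {X_1,…,X_i, a}, and the set {X_1,…,X_i, a} \ {Y_1,…,Y_i} is a singleton; in particular Y_{i+1} ∈ T \ {Y_1,…,Y_i}, so the construction is well defined. -/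

import Mathlib

open MeasureTheory Finset

/-- Partition of the "pairwise distinct on `P`" event according to the values of `X`. -/
lemma part_aux {Ω α : Type*} [MeasurableSpace Ω] [MeasurableSpace α]
    [MeasurableSingletonClass α] [DecidableEq α]
    (μ : Measure Ω) {k : ℕ} (X : Fin k → Ω → α) (hXmeas : ∀ j, Measurable (X j))
    (S : Finset α) (a : α) (hXS : ∀ (j : Fin k) (ω : Ω), X j ω ∈ S)
    (P : Fin k → Prop) [DecidablePred P] :
    μ {ω | ∀ l l', P l → P l' → l ≠ l' → X l ω ≠ X l' ω} =
      ∑ x ∈ (Fintype.piFinset fun l => if P l then S else {a}) |>.filter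
          (fun x => ∀ l l', P l → P l' → l ≠ l' → x l ≠ x l'),
        μ {ω | ∀ l, P l → X l ω = x l} := by
  have hmeas : ∀ x : Fin k → α, MeasurableSet {ω | ∀ l, P l → X l ω = x l} := by
    intro x
    have : {ω | ∀ l, P l → X l ω = x l} = ⋂ l, ⋂ (_ : P l), X l ⁻¹' {x l} := by
      ext ω; simp [Set.mem_iInter]
    rw [this]
    exact MeasurableSet.iInter fun l => MeasurableSet.iInter fun _ =>
      (hXmeas l) (measurableSet_singleton _)
  have hkey : ∀ x ∈ (Fintype.piFinset fun l : Fin k => if P l then S else {a}),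
      ∀ x' ∈ (Fintype.piFinset fun l : Fin k => if P l then S else {a}),
      ∀ ω : Ω, ω ∈ {ω | ∀ l, P l → X l ω = x l} → ω ∈ {ω | ∀ l, P l → X l ω = x' l} →
      x = x' := by
    intro x hx x' hx' ω hω hω'
    funext l
    by_cases hPl : P l
    · rw [← hω l hPl, hω' l hPl]
    · have h1 := Fintype.mem_piFinset.1 hx l
      have h2 := Fintype.mem_piFinset.1 hx' l
      rw [if_neg hPl] at h1 h2
      simp only [mem_singleton] at h1 h2
      rw [h1, h2]
  rw [← measure_biUnion_finset ?_ (fun x _ => hmeas x)]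
  · congr 1
    ext ω
    simp only [Set.mem_iUnion, mem_filter, Fintype.mem_piFinset, Set.mem_setOf_eq]
    constructor
    · intro h
      refine ⟨fun l => if P l then X l ω else a, ⟨⟨fun l => ?_, fun l l' hl hl' hne => ?_⟩,
        fun l hl => ?_⟩⟩
      · by_cases hPl : P l <;> simp [hPl, hXS]
      · simp only [if_pos hl, if_pos hl']
        exact h l l' hl hl' hne
      · simp [if_pos hl]
    · rintro ⟨x, ⟨⟨hx1, hx2⟩, hx3⟩⟩ l l' hl hl' hne
      rw [hx3 l hl, hx3 l' hl']
      exact hx2 l l' hl hl' hne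
  · intro x hx x' hx' hne
    simp only [mem_coe, mem_filter] at hx hx'
    refine Set.disjoint_left.2 fun ω hω hω' => hne ?_
    exact hkey x hx.1 x' hx'.1 ω hω hω'


lemma evt_meas {Ω α : Type*} [MeasurableSpace Ω] [MeasurableSpace α]
    [MeasurableSingletonClass α] {k : ℕ}
    (X : Fin k → Ω → α) (hXmeas : ∀ j, Measurable (X j)) (Q : Fin k → Prop) (x : Fin k → α) :
    MeasurableSet {ω | ∀ l, Q l → X l ω = x l} := by
  have : {ω | ∀ l, Q l → X l ω = x l} = ⋂ l, ⋂ (_ : Q l), X l ⁻¹' {x l} := by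
    ext ω; simp [Set.mem_iInter]
  rw [this]
  exact MeasurableSet.iInter fun l => MeasurableSet.iInter fun _ =>
    (hXmeas l) (measurableSet_singleton _)


/-- The sample without replacement is a.s. injective. -/
lemma ae_inj {Ω α : Type*} [MeasurableSpace Ω] [MeasurableSpace α]
    [MeasurableSingletonClass α] [DecidableEq α]
    (μ : Measure Ω) [IsProbabilityMeasure μ]
    (S : Finset α) (a : α) (ha : a ∉ S)
    (w : α → ℝ) (hw : ∀ c ∈ insert a S, 0 < w c)
    (k : ℕ) (hk : k ≤ S.card)
    (X : Fin k → Ω → α)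
    (hXmeas : ∀ j, Measurable (X j))
    (hXS : ∀ (j : Fin k) (ω : Ω), X j ω ∈ S)
    (hXlaw : ∀ (j : Fin k) (x : Fin k → α),
      (∀ l, l ≤ j → x l ∈ S) →
      (∀ l l', l ≤ j → l' ≤ j → l ≠ l' → x l ≠ x l') →
      μ {ω | ∀ l, l ≤ j → X l ω = x l} =
        ENNReal.ofReal
            (w (x j) / ∑ c ∈ S \ (Finset.univ.filter (· < j)).image x, w c) *
          μ {ω | ∀ l, l < j → X l ω = x l}) :
    μ {ω | ∀ l l' : Fin k, l ≠ l' → X l ω ≠ X l' ω} = 1 := by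
  have claim : ∀ n, n ≤ k →
      μ {ω | ∀ l l' : Fin k, (l : ℕ) < n → (l' : ℕ) < n → l ≠ l' → X l ω ≠ X l' ω} = 1 := by
    intro n
    induction n with
    | zero =>
      intro _
      have : {ω : Ω | ∀ l l' : Fin k, (l : ℕ) < 0 → (l' : ℕ) < 0 → l ≠ l' → X l ω ≠ X l' ω}
          = Set.univ := by ext ω; simp
      rw [this, measure_univ]
    | succ n ih =>
      intro hn1
      have ihp := ih (Nat.le_of_succ_le hn1)
      clear ih
      have part_auxp : ∀ (P : Fin k → Prop) [DecidablePred P],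
          μ {ω | ∀ l l', P l → P l' → l ≠ l' → X l ω ≠ X l' ω} =
          ∑ x ∈ (Fintype.piFinset fun l => if P l then S else {a}) |>.filter
              (fun x => ∀ l l', P l → P l' → l ≠ l' → x l ≠ x l'),
            μ {ω | ∀ l, P l → X l ω = x l} := fun P _ =>
        part_aux μ X hXmeas S a hXS P
      have hnk : n < k := hn1
      set j : Fin k := ⟨n, hnk⟩ with hj
      classical
      set F := ((Fintype.piFinset fun l : Fin k => if l < j then S else {a}).filter
          (fun x => ∀ l l' : Fin k, l < j → l' < j → l ≠ l' → x l ≠ x l')) with hF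
      have hAn : μ {ω | ∀ l l' : Fin k, l < j → l' < j → l ≠ l' → X l ω ≠ X l' ω}
          = ∑ y ∈ F, μ {ω | ∀ l, l < j → X l ω = y l} := part_auxp (fun l => l < j)
      have hsum_one : ∑ y ∈ F, μ {ω | ∀ l, l < j → X l ω = y l} = 1 := by
        rw [← hAn]
        have e : {ω : Ω | ∀ l l' : Fin k, l < j → l' < j → l ≠ l' → X l ω ≠ X l' ω}
            = {ω | ∀ l l' : Fin k, (l : ℕ) < n → (l' : ℕ) < n → l ≠ l' → X l ω ≠ X l' ω} := by
          ext ω; simp [Fin.lt_def, -Fin.val_fin_lt, hj]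
        rw [e]; exact ihp
      -- basic facts about members of F
      have hyS : ∀ y ∈ F, ∀ l : Fin k, l < j → y l ∈ S := by
        intro y hy l hl
        have := Fintype.mem_piFinset.1 (mem_filter.1 hy).1 l
        rwa [if_pos hl] at this
      have hya : ∀ y ∈ F, ∀ l : Fin k, ¬ l < j → y l = a := by
        intro y hy l hl
        have := Fintype.mem_piFinset.1 (mem_filter.1 hy).1 l
        rw [if_neg hl] at this
        simpa using this
      have hWpos : ∀ y ∈ F,
          0 < ∑ c ∈ S \ (Finset.univ.filter (· < j)).image y, w c := by
        intro y hy
        have hcard : ((Finset.univ.filter (· < j)).image y).card ≤ n := by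
          refine le_trans Finset.card_image_le ?_
          have : (Finset.univ.filter (· < j)) = Finset.Iio j := by ext l; simp
          rw [this, Fin.card_Iio]
        have hne : (S \ (Finset.univ.filter (· < j)).image y).Nonempty := by
          rw [← Finset.card_pos]
          have h1 := Finset.le_card_sdiff ((Finset.univ.filter (· < j)).image y) S
          omega
        exact Finset.sum_pos (fun c hc => hw c (mem_insert_of_mem (mem_sdiff.1 hc).1)) hne
      have hupd_lt : ∀ (y : Fin k → α) (b : α), ∀ l : Fin k, l < j →
          Function.update y j b l = y l :=
        fun y b l hl => Function.update_of_ne (ne_of_lt hl) _ _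
      have hlt : ∀ l : Fin k, l ≤ j → l ≠ j → l < j := fun l hl hne => lt_of_le_of_ne hl hne
      have hinj_upd : ∀ y ∈ F, ∀ b ∈ S \ (Finset.univ.filter (· < j)).image y,
          ∀ l l' : Fin k, l ≤ j → l' ≤ j → l ≠ l' →
            Function.update y j b l ≠ Function.update y j b l' := by
        intro y hy b hb l l' hl hl' hne
        obtain ⟨hbS, hbimg⟩ := mem_sdiff.1 hb
        rcases eq_or_ne l j with rfl | hlj
        · rw [Function.update_self, hupd_lt y b l' (hlt l' hl' (Ne.symm hne).symm.symm)]
          · intro hcontra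
            exact hbimg (mem_image.2 ⟨l', mem_filter.2 ⟨mem_univ _, hlt l' hl' (Ne.symm hne)⟩,
              hcontra.symm⟩)
        · rcases eq_or_ne l' j with rfl | hl'j
          · rw [Function.update_self, hupd_lt y b l (hlt l hl hlj)]
            intro hcontra
            exact hbimg (mem_image.2 ⟨l, mem_filter.2 ⟨mem_univ _, hlt l hl hlj⟩, hcontra⟩)
          · rw [hupd_lt y b l (hlt l hl hlj), hupd_lt y b l' (hlt l' hl' hl'j)]
            exact (mem_filter.1 hy).2 l l' (hlt l hl hlj) (hlt l' hl' hl'j) hne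
      have hterm : ∀ y ∈ F, ∀ b ∈ S \ (Finset.univ.filter (· < j)).image y,
          μ {ω | ∀ l, l ≤ j → X l ω = Function.update y j b l}
            = ENNReal.ofReal (w b / ∑ c ∈ S \ (Finset.univ.filter (· < j)).image y, w c)
              * μ {ω | ∀ l, l < j → X l ω = y l} := by
        intro y hy b hb
        obtain ⟨hbS, hbimg⟩ := mem_sdiff.1 hb
        have h1 : ∀ l, l ≤ j → Function.update y j b l ∈ S := by
          intro l hl
          rcases eq_or_ne l j with rfl | hne
          · rw [Function.update_self]; exact hbS
          · rw [hupd_lt y b l (hlt l hl hne)]; exact hyS y hy _ (hlt l hl hne)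
        have := hXlaw j (Function.update y j b) h1 (hinj_upd y hy b hb)
        rw [this, Function.update_self]
        have himg : (Finset.univ.filter (· < j)).image (Function.update y j b)
            = (Finset.univ.filter (· < j)).image y :=
          Finset.image_congr (fun l hl => hupd_lt y b l (by simpa using (mem_filter.1 hl).2))
        have hevt : {ω : Ω | ∀ l, l < j → X l ω = Function.update y j b l}
            = {ω | ∀ l, l < j → X l ω = y l} := by
          ext ω
          simp only [Set.mem_setOf_eq]
          exact ⟨fun h l hl => (h l hl).trans (hupd_lt y b l hl),
            fun h l hl => (h l hl).trans (hupd_lt y b l hl).symm⟩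
        rw [himg, hevt]
      have hsum1 : ∀ y ∈ F,
          ∑ b ∈ S \ (Finset.univ.filter (· < j)).image y,
            ENNReal.ofReal (w b / ∑ c ∈ S \ (Finset.univ.filter (· < j)).image y, w c) = 1 := by
        intro y hy
        rw [← ENNReal.ofReal_sum_of_nonneg (fun b hb => div_nonneg
          (le_of_lt (hw b (mem_insert_of_mem (mem_sdiff.1 hb).1))) (hWpos y hy).le)]
        rw [← Finset.sum_div, div_self (hWpos y hy).ne', ENNReal.ofReal_one]
      -- disjointness of the events g y b
      have hdisj : ∀ y ∈ F, ∀ b ∈ S \ (Finset.univ.filter (· < j)).image y,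
          ∀ y' ∈ F, ∀ b' ∈ S \ (Finset.univ.filter (· < j)).image y',
          ∀ ω : Ω, (∀ l, l ≤ j → X l ω = Function.update y j b l) →
            (∀ l, l ≤ j → X l ω = Function.update y' j b' l) → y = y' ∧ b = b' := by
        intro y hy b hb y' hy' b' hb' ω h1 h2
        constructor
        · funext l
          by_cases hl : l < j
          · rw [← hupd_lt y b l hl, ← hupd_lt y' b' l hl, ← h1 l hl.le, h2 l hl.le]
          · rw [hya y hy l hl, hya y' hy' l hl]
        · have e1 := h1 j le_rfl
          have e2 := h2 j le_rfl
          rw [Function.update_self] at e1 e2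
          rw [← e1, e2]
      -- the big inequality
      have hsub : (⋃ y ∈ F, ⋃ b ∈ S \ (Finset.univ.filter (· < j)).image y,
          {ω | ∀ l, l ≤ j → X l ω = Function.update y j b l})
          ⊆ {ω | ∀ l l' : Fin k, (l : ℕ) < n + 1 → (l' : ℕ) < n + 1 → l ≠ l' →
              X l ω ≠ X l' ω} := by
        intro ω hω
        simp only [Set.mem_iUnion] at hω
        obtain ⟨y, hy, b, hb, hω⟩ := hω
        intro l l' hl hl' hne
        have hlj : l ≤ j := Fin.le_def.2 (Nat.lt_succ_iff.1 hl)
        have hl'j : l' ≤ j := Fin.le_def.2 (Nat.lt_succ_iff.1 hl')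
        rw [hω l hlj, hω l' hl'j]
        exact hinj_upd y hy b hb l l' hlj hl'j hne
      have hmeas_inner : ∀ y ∈ F, ∀ b ∈ S \ (Finset.univ.filter (· < j)).image y,
          MeasurableSet {ω : Ω | ∀ l, l ≤ j → X l ω = Function.update y j b l} :=
        fun y _ b _ => evt_meas X hXmeas _ _
      have hUnion : μ (⋃ y ∈ F, ⋃ b ∈ S \ (Finset.univ.filter (· < j)).image y,
          {ω | ∀ l, l ≤ j → X l ω = Function.update y j b l})
          = ∑ y ∈ F, ∑ b ∈ S \ (Finset.univ.filter (· < j)).image y,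
              μ {ω | ∀ l, l ≤ j → X l ω = Function.update y j b l} := by
        rw [measure_biUnion_finset]
        · refine Finset.sum_congr rfl fun y hy => ?_
          rw [measure_biUnion_finset]
          · intro b hb b' hb' hne
            refine Set.disjoint_left.2 fun ω hω hω' => hne ?_
            exact (hdisj y hy b (by simpa using hb) y hy b' (by simpa using hb') ω hω hω').2
          · exact fun b hb => hmeas_inner y hy b hb
        · intro y hy y' hy' hne
          simp only [mem_coe] at hy hy'
          refine Set.disjoint_left.2 fun ω hω hω' => hne ?_
          simp only [Set.mem_iUnion] at hω hω'
          obtain ⟨b, hb, hω⟩ := hω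
          obtain ⟨b', hb', hω'⟩ := hω'
          exact (hdisj y hy b hb y' hy' b' hb' ω hω hω').1
        · exact fun y hy => Finset.measurableSet_biUnion _ (fun b hb =>
            hmeas_inner y (by simpa using hy) b hb)
      have hge : (1 : ENNReal) ≤ μ {ω | ∀ l l' : Fin k, (l : ℕ) < n + 1 →
          (l' : ℕ) < n + 1 → l ≠ l' → X l ω ≠ X l' ω} := by
        calc (1 : ENNReal) = ∑ y ∈ F, μ {ω | ∀ l, l < j → X l ω = y l} := hsum_one.symm
          _ = ∑ y ∈ F, ∑ b ∈ S \ (Finset.univ.filter (· < j)).image y,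
              μ {ω | ∀ l, l ≤ j → X l ω = Function.update y j b l} := by
              refine Finset.sum_congr rfl fun y hy => ?_
              rw [Finset.sum_congr rfl (fun b hb => hterm y hy b hb), ← Finset.sum_mul,
                hsum1 y hy, one_mul]
          _ = μ (⋃ y ∈ F, ⋃ b ∈ S \ (Finset.univ.filter (· < j)).image y,
              {ω | ∀ l, l ≤ j → X l ω = Function.update y j b l}) := hUnion.symm
          _ ≤ _ := measure_mono hsub
      exact le_antisymm prob_le_one hge
  have := claim k le_rfl
  convert this using 2
  ext ω
  constructor
  · intro h l l' _ _ hne; exact h l l' hne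
  · intro h l l' hne; exact h l l' l.isLt l'.isLt hne

lemma pointwise {α : Type*} [DecidableEq α] {k : ℕ} (S : Finset α) (a : α) (ha : a ∉ S)
    (Xv Yv : Fin k → α)
    (hXS : ∀ j, Xv j ∈ S)
    (hinj : ∀ l l' : Fin k, l ≠ l' → Xv l ≠ Xv l')
    (hY0 : ∀ h0 : 0 < k, Yv ⟨0, h0⟩ = a ∨ Yv ⟨0, h0⟩ = Xv ⟨0, h0⟩)
    (hYsucc : ∀ (i : ℕ) (hi : i + 1 < k) (Z : α),
      insert a ((Finset.univ.filter fun l : Fin k => l.val ≤ i).image Xv) \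
          ((Finset.univ.filter fun l : Fin k => l.val ≤ i).image Yv) = {Z} →
      Yv ⟨i + 1, hi⟩ = Z ∨ Yv ⟨i + 1, hi⟩ = Xv ⟨i + 1, hi⟩) :
    ∀ i : Fin k,
      (∀ l l', l ≤ i → l' ≤ i → l ≠ l' → Yv l ≠ Yv l') ∧
      (∀ l, l ≤ i → Yv l ∈ insert a S) ∧
      (∀ l, l ≤ i →
        Yv l ∈ insert a ((Finset.univ.filter (· ≤ i)).image Xv)) ∧
      ((insert a ((Finset.univ.filter (· ≤ i)).image Xv) \
          ((Finset.univ.filter (· ≤ i)).image Yv)).card = 1) ∧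
      (∀ hi : i.val + 1 < k,
        Yv ⟨i.val + 1, hi⟩ ∈
          (insert a S) \ ((Finset.univ.filter (· ≤ i)).image Yv)) := by
  classical
  have hXinjective : Function.Injective Xv := fun l l' h => by
    by_contra hne; exact hinj l l' hne h
  have filter_nat : ∀ (n : ℕ) (hn : n < k),
      (Finset.univ.filter fun l : Fin k => l.val ≤ n)
        = Finset.univ.filter (· ≤ (⟨n, hn⟩ : Fin k)) := by
    intro n hn; ext l; simp [Fin.le_def]
  have hAsubT : ∀ i : Fin k,
      insert a ((Finset.univ.filter (· ≤ i)).image Xv) ⊆ insert a S := by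
    intro i c hc
    rcases mem_insert.1 hc with h | h
    · exact h ▸ mem_insert_self _ _
    · obtain ⟨l, _, hl⟩ := mem_image.1 h
      exact mem_insert_of_mem (hl ▸ hXS l)
  have hBA : ∀ i : Fin k,
      (∀ l, l ≤ i → Yv l ∈ insert a ((Finset.univ.filter (· ≤ i)).image Xv)) →
      (Finset.univ.filter (· ≤ i)).image Yv
        ⊆ insert a ((Finset.univ.filter (· ≤ i)).image Xv) := by
    intro i H2
    refine Finset.image_subset_iff.2 fun l hl => H2 l (mem_filter.1 hl).2
  have hcf : ∀ i : Fin k, (Finset.univ.filter (· ≤ i)).card = i.val + 1 := by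
    intro i
    have : (Finset.univ.filter (· ≤ i)) = Finset.Iic i := by ext l; simp
    rw [this, Fin.card_Iic]
  have cardfact : ∀ i : Fin k,
      (∀ l l', l ≤ i → l' ≤ i → l ≠ l' → Yv l ≠ Yv l') →
      (∀ l, l ≤ i → Yv l ∈ insert a ((Finset.univ.filter (· ≤ i)).image Xv)) →
      ∃ Z, insert a ((Finset.univ.filter (· ≤ i)).image Xv) \
          ((Finset.univ.filter (· ≤ i)).image Yv) = {Z} := by
    intro i H1 H2
    have hAcard : (insert a ((Finset.univ.filter (· ≤ i)).image Xv)).card = i.val + 2 := by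
      rw [card_insert_of_notMem, Finset.card_image_of_injective _ hXinjective, hcf]
      intro hmem
      obtain ⟨l, _, hl⟩ := mem_image.1 hmem
      exact ha (hl ▸ hXS l)
    have hBcard : ((Finset.univ.filter (· ≤ i)).image Yv).card = i.val + 1 := by
      rw [Finset.card_image_of_injOn, hcf]
      intro l hl l' hl' h
      by_contra hne
      exact H1 l l' (by simpa using (mem_filter.1 hl).2) (by simpa using (mem_filter.1 hl').2)
        hne h
    refine Finset.card_eq_one.1 ?_
    rw [card_sdiff_of_subset (hBA i H2), hAcard, hBcard]
    omega
  have hXnotA : ∀ (n : ℕ) (hn1 : n + 1 < k),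
      Xv ⟨n + 1, hn1⟩ ∉ insert a
        ((Finset.univ.filter (· ≤ (⟨n, Nat.lt_of_succ_lt hn1⟩ : Fin k))).image Xv) := by
    intro n hn1 hmem
    rcases mem_insert.1 hmem with h | h
    · exact ha (h ▸ hXS _)
    · obtain ⟨l, hl, hxl⟩ := mem_image.1 h
      have hlle := (mem_filter.1 hl).2
      have : l ≠ ⟨n + 1, hn1⟩ := by
        intro e
        rw [e] at hlle
        simp [Fin.le_def] at hlle
      exact hinj l _ this hxl
  have succfact : ∀ (n : ℕ) (hn1 : n + 1 < k),
      (∀ l l', l ≤ (⟨n, Nat.lt_of_succ_lt hn1⟩ : Fin k) →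
        l' ≤ (⟨n, Nat.lt_of_succ_lt hn1⟩ : Fin k) → l ≠ l' → Yv l ≠ Yv l') →
      (∀ l, l ≤ (⟨n, Nat.lt_of_succ_lt hn1⟩ : Fin k) → Yv l ∈ insert a
        ((Finset.univ.filter (· ≤ (⟨n, Nat.lt_of_succ_lt hn1⟩ : Fin k))).image Xv)) →
      Yv ⟨n + 1, hn1⟩ ∉
          ((Finset.univ.filter (· ≤ (⟨n, Nat.lt_of_succ_lt hn1⟩ : Fin k))).image Yv) ∧
        Yv ⟨n + 1, hn1⟩ ∈ insert (Xv ⟨n + 1, hn1⟩)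
          (insert a ((Finset.univ.filter
            (· ≤ (⟨n, Nat.lt_of_succ_lt hn1⟩ : Fin k))).image Xv)) := by
    intro n hn1 H1 H2
    obtain ⟨Z, hZ⟩ := cardfact _ H1 H2
    have hZmem := mem_sdiff.1 (hZ ▸ Finset.mem_singleton_self Z)
    have hY' : Yv ⟨n + 1, hn1⟩ = Z ∨ Yv ⟨n + 1, hn1⟩ = Xv ⟨n + 1, hn1⟩ := by
      refine hYsucc n hn1 Z ?_
      rw [filter_nat n (Nat.lt_of_succ_lt hn1)]
      exact hZ
    constructor
    · rcases hY' with h | h <;> rw [h]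
      · exact hZmem.2
      · intro hmem
        exact hXnotA n hn1 (hBA _ H2 hmem)
    · rcases hY' with h | h <;> rw [h]
      · exact mem_insert_of_mem hZmem.1
      · exact mem_insert_self _ _
  have key : ∀ (n : ℕ) (hn : n < k),
      (∀ l l', l ≤ (⟨n, hn⟩ : Fin k) → l' ≤ (⟨n, hn⟩ : Fin k) → l ≠ l' → Yv l ≠ Yv l') ∧
      (∀ l, l ≤ (⟨n, hn⟩ : Fin k) → Yv l ∈ insert a
        ((Finset.univ.filter (· ≤ (⟨n, hn⟩ : Fin k))).image Xv)) := by
    intro n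
    induction n with
    | zero =>
      intro hn
      have hle : ∀ l : Fin k, l ≤ (⟨0, hn⟩ : Fin k) → l = ⟨0, hn⟩ := fun l hl =>
        Fin.ext (Nat.le_zero.1 hl)
      constructor
      · intro l l' hl hl' hne
        exact absurd ((hle l hl).trans (hle l' hl').symm) hne
      · intro l hl
        rw [hle l hl]
        rcases hY0 hn with h | h <;> rw [h]
        · exact mem_insert_self _ _
        · exact mem_insert_of_mem (mem_image_of_mem _ (mem_filter.2 ⟨mem_univ _, le_refl _⟩))
    | succ n ih =>
      intro hn1
      have hn := Nat.lt_of_succ_lt hn1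
      obtain ⟨H1, H2⟩ := ih hn
      obtain ⟨hYnotB, hYinA'⟩ := succfact n hn1 H1 H2
      have hfilter_succ : Finset.univ.filter (· ≤ (⟨n + 1, hn1⟩ : Fin k))
          = insert (⟨n + 1, hn1⟩ : Fin k) (Finset.univ.filter (· ≤ (⟨n, hn⟩ : Fin k))) := by
        ext l; simp only [mem_filter, mem_univ, true_and, mem_insert, Fin.le_def, Fin.ext_iff]
        omega
      have hA' : insert a ((Finset.univ.filter (· ≤ (⟨n + 1, hn1⟩ : Fin k))).image Xv)
          = insert (Xv ⟨n + 1, hn1⟩)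
            (insert a ((Finset.univ.filter (· ≤ (⟨n, hn⟩ : Fin k))).image Xv)) := by
        rw [hfilter_succ, Finset.image_insert, Finset.insert_comm]
      have hcase : ∀ m : Fin k, m ≤ (⟨n + 1, hn1⟩ : Fin k) →
          m = (⟨n + 1, hn1⟩ : Fin k) ∨ m ≤ (⟨n, hn⟩ : Fin k) := by
        intro m hm
        rcases eq_or_ne m ⟨n + 1, hn1⟩ with h | h
        · exact Or.inl h
        · right
          have h1 : m.val ≤ n + 1 := hm
          have h2 : m.val ≠ n + 1 := fun e => h (Fin.ext e)
          exact (by omega : m.val ≤ n)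
      constructor
      · intro l l' hl hl' hne
        rcases hcase l hl with rfl | hli <;> rcases hcase l' hl' with rfl | hl'i
        · exact absurd rfl hne
        · intro h
          exact hYnotB (h ▸ mem_image_of_mem Yv (mem_filter.2 ⟨mem_univ _, hl'i⟩))
        · intro h
          exact hYnotB (h.symm ▸ mem_image_of_mem Yv (mem_filter.2 ⟨mem_univ _, hli⟩))
        · exact H1 l l' hli hl'i hne
      · intro l hl
        rcases hcase l hl with rfl | hli
        · rw [hA']; exact hYinA'
        · rw [hA']
          exact mem_insert_of_mem (H2 l hli)
  intro i
  obtain ⟨H1, H2⟩ := key i.val i.isLt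
  refine ⟨H1, fun l hl => hAsubT i (H2 l hl), H2, ?_, ?_⟩
  · obtain ⟨Z, hZ⟩ := cardfact i H1 H2
    rw [hZ, card_singleton]
  · intro hi
    obtain ⟨hYnotB, hYinA'⟩ := succfact i.val hi H1 H2
    refine mem_sdiff.2 ⟨?_, hYnotB⟩
    rcases mem_insert.1 hYinA' with h | h
    · exact h ▸ mem_insert_of_mem (hXS _)
    · exact hAsubT i h

/-- **well-definedness of the cascade construction.**  Let `S` be a finite
set with `|S| ≥ k`, `a ∉ S`, `T = insert a S`, `w` strictly positive on `T`.  Let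
`(X 0, …, X (k-1))` be a `k`-sample without replacement from `S`, and let
`(Y 0, …, Y (k-1))` be given by the cascade construction (with coin flips `B i` of the
appropriate conditional probabilities, independent of everything else).  Then, almost
surely, for every `i < k`: the elements `Y 0, …, Y i` are pairwise distinct elements of
`T`, `{Y 0, …, Y i} ⊆ {X 0, …, X i, a}`, the set `{X 0, …, X i, a} \ {Y 0, …, Y i}` is a
singleton, and `Y (i+1) ∈ T \ {Y 0, …, Y i}` (whenever `i + 1 < k`); so the construction
is well defined. -/
theorem statement5 {Ω α : Type*} [MeasurableSpace Ω] [MeasurableSpace α]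
    [MeasurableSingletonClass α] [DecidableEq α]
    (μ : Measure Ω) [IsProbabilityMeasure μ]
    (S : Finset α) (a : α) (ha : a ∉ S)
    (w : α → ℝ) (hw : ∀ c ∈ insert a S, 0 < w c)
    (k : ℕ) (hk : k ≤ S.card)
    (X : Fin k → Ω → α)
    (hXmeas : ∀ j, Measurable (X j))
    (hXS : ∀ (j : Fin k) (ω : Ω), X j ω ∈ S)
    -- `X` is a `k`-sample without replacement from `S` (sequential definition):
    (hXlaw : ∀ (j : Fin k) (x : Fin k → α),
      (∀ l, l ≤ j → x l ∈ S) →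
      (∀ l l', l ≤ j → l' ≤ j → l ≠ l' → x l ≠ x l') →
      μ {ω | ∀ l, l ≤ j → X l ω = x l} =
        ENNReal.ofReal
            (w (x j) / ∑ c ∈ S \ (Finset.univ.filter (· < j)).image x, w c) *
          μ {ω | ∀ l, l < j → X l ω = x l})
    (B : Fin k → Set Ω) (hBmeas : ∀ i, MeasurableSet (B i))
    (Y : Fin k → Ω → α) (hYmeas : ∀ i, Measurable (Y i))
    -- the cascade update rules:
    (hY0 : ∀ (h0 : 0 < k) (ω : Ω),
      (ω ∈ B ⟨0, h0⟩ → Y ⟨0, h0⟩ ω = a) ∧ (ω ∉ B ⟨0, h0⟩ → Y ⟨0, h0⟩ ω = X ⟨0, h0⟩ ω))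
    (hYsucc : ∀ (i : ℕ) (hi : i + 1 < k) (ω : Ω) (Z : α),
      insert a ((Finset.univ.filter fun l : Fin k => l.val ≤ i).image fun l => X l ω) \
          ((Finset.univ.filter fun l : Fin k => l.val ≤ i).image fun l => Y l ω) = {Z} →
      (ω ∈ B ⟨i + 1, hi⟩ → Y ⟨i + 1, hi⟩ ω = Z) ∧
        (ω ∉ B ⟨i + 1, hi⟩ → Y ⟨i + 1, hi⟩ ω = X ⟨i + 1, hi⟩ ω))
    -- the coin `B i` lands heads with (conditional) probability `w Z / w (U (i-1))`,
    -- independently of everything else: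
    (hBcond : ∀ (i : Fin k) (x y : Fin k → α) (Z : α),
      insert a ((Finset.univ.filter (· < i)).image x) \
          ((Finset.univ.filter (· < i)).image y) = {Z} →
      μ (B i ∩ {ω | (∀ l, X l ω = x l) ∧ ∀ l, l < i → Y l ω = y l}) =
        ENNReal.ofReal
            (w Z /
              ∑ c ∈ (insert a S) \ (Finset.univ.filter (· < i)).image y, w c) *
          μ {ω | (∀ l, X l ω = x l) ∧ ∀ l, l < i → Y l ω = y l}) :
    ∀ᵐ ω ∂μ, ∀ i : Fin k,
      (∀ l l', l ≤ i → l' ≤ i → l ≠ l' → Y l ω ≠ Y l' ω) ∧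
      (∀ l, l ≤ i → Y l ω ∈ insert a S) ∧
      (∀ l, l ≤ i →
        Y l ω ∈ insert a ((Finset.univ.filter (· ≤ i)).image fun j => X j ω)) ∧
      ((insert a ((Finset.univ.filter (· ≤ i)).image fun j => X j ω) \
          ((Finset.univ.filter (· ≤ i)).image fun j => Y j ω)).card = 1) ∧
      (∀ hi : i.val + 1 < k,
        Y ⟨i.val + 1, hi⟩ ω ∈
          (insert a S) \ ((Finset.univ.filter (· ≤ i)).image fun j => Y j ω)) := by
  have hinjset_meas : MeasurableSet {ω | ∀ l l' : Fin k, l ≠ l' → X l ω ≠ X l' ω} := by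
    have : {ω | ∀ l l' : Fin k, l ≠ l' → X l ω ≠ X l' ω}
        = ⋂ l, ⋂ l', ⋂ (_ : l ≠ l'),
          (⋃ s ∈ S, (X l ⁻¹' {s}) ∩ (X l' ⁻¹' {s}))ᶜ := by
      ext ω
      simp only [Set.mem_iInter, Set.mem_setOf_eq, Set.mem_compl_iff, Set.mem_iUnion,
        Set.mem_inter_iff, Set.mem_preimage, Set.mem_singleton_iff, not_exists]
      constructor
      · intro h l l' hne
        push_neg
        intro s hs hxl hxl'
        exact h l l' hne (hxl.trans hxl'.symm)
      · intro h l l' hne heq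
        have := h l l' hne (X l ω)
        push_neg at this
        exact this (hXS l ω) rfl heq.symm
    rw [this]
    refine MeasurableSet.iInter fun l => MeasurableSet.iInter fun l' =>
      MeasurableSet.iInter fun _ => (Finset.measurableSet_biUnion _ fun s _ =>
        ((hXmeas l) (measurableSet_singleton _)).inter
          ((hXmeas l') (measurableSet_singleton _))).compl
  have hinj_ae : ∀ᵐ ω ∂μ, ∀ l l' : Fin k, l ≠ l' → X l ω ≠ X l' ω := by
    have h1 := ae_inj μ S a ha w hw k hk X hXmeas hXS hXlaw
    rw [ae_iff]
    have hc : {ω | ¬ ∀ l l' : Fin k, l ≠ l' → X l ω ≠ X l' ω}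
        = {ω | ∀ l l' : Fin k, l ≠ l' → X l ω ≠ X l' ω}ᶜ := rfl
    rw [hc, measure_compl hinjset_meas (measure_ne_top μ _), h1, measure_univ, tsub_self]
  filter_upwards [hinj_ae] with ω hω
  refine pointwise S a ha (fun j => X j ω) (fun j => Y j ω) (fun j => hXS j ω) hω
    (fun h0 => ?_) (fun i hi Z hZ => ?_)
  · by_cases hB : ω ∈ B ⟨0, h0⟩
    · exact Or.inl ((hY0 h0 ω).1 hB)
    · exact Or.inr ((hY0 h0 ω).2 hB)
  · by_cases hB : ω ∈ B ⟨i + 1, hi⟩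
    · exact Or.inl ((hYsucc i hi ω Z hZ).1 hB)
    · exact Or.inr ((hYsucc i hi ω Z hZ).2 hB)
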